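/- Let E be a finite dimensional complex inner product space of dimension d, 0 < d₀ < d, and W a subspace of dimension d₀. There is a constant C > 0 (depending only on d) such that for every subspace V of dimension d − d₀ with V ∩ W = 0, the projection π_{V,W} : E → E onto V along W (with respect to E = V ⊕ W) satisfies ‖π_{V,W}‖ ≤ C / δ(V, W), where δ(V, W) = |det[V | W]| is computed using orthonormal bases of V and W relative to a fixed orthonormal basis of E. -/

import Mathlib

open scoped ComplexInnerProductSpace

/-- The `d × d` matrix `[V | W]` whose first `n` columns are the coordinates (in the fixed
orthonormal basis `u` of `E`) of an orthonormal basis `φ` of `V` and whose last `m` columns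
are those of an orthonormal basis `ψ` of `W`. -/
noncomputable def colMat {E : Type*} [NormedAddCommGroup E] [InnerProductSpace ℂ E]
    {n m : ℕ} {V W : Submodule ℂ E}
    (u : OrthonormalBasis (Fin (n + m)) ℂ E)
    (φ : OrthonormalBasis (Fin n) ℂ ↥V) (ψ : OrthonormalBasis (Fin m) ℂ ↥W) :
    Matrix (Fin (n + m)) (Fin (n + m)) ℂ :=
  Matrix.of fun i j =>
    u.repr (Sum.elim (fun k => ((φ k : ↥V) : E)) (fun k => ((ψ k : ↥W) : E))
      (finSumFinEquiv.symm j)) i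

/-- Leibniz bound: a matrix with entries of absolute value at most `1` has
`|det| ≤ d!`. -/
lemma abs_det_le_factorial {d : ℕ} (B : Matrix (Fin d) (Fin d) ℂ)
    (h : ∀ i j, ‖B i j‖ ≤ 1) :
    ‖B.det‖ ≤ (Nat.factorial d : ℝ) := by
  rw [Matrix.det_apply]
  calc ‖∑ σ : Equiv.Perm (Fin d), Equiv.Perm.sign σ • ∏ i, B (σ i) i‖
      ≤ ∑ σ : Equiv.Perm (Fin d), ‖Equiv.Perm.sign σ • ∏ i, B (σ i) i‖ :=
        norm_sum_le _ _
    _ ≤ ∑ _σ : Equiv.Perm (Fin d), (1 : ℝ) := by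
        refine Finset.sum_le_sum fun σ _ => ?_
        have h1 : ‖Equiv.Perm.sign σ • ∏ i, B (σ i) i‖
            = ‖∏ i, B (σ i) i‖ := by
          rcases Int.units_eq_one_or (Equiv.Perm.sign σ) with hs | hs <;> simp [hs]
        rw [h1, norm_prod]
        exact Finset.prod_le_one (fun i _ => norm_nonneg _) (fun i _ => h _ _)
    _ = (Fintype.card (Equiv.Perm (Fin d)) : ℝ) := by simp
    _ = (Nat.factorial d : ℝ) := by simp [Fintype.card_perm]

/-- There is a constant `C > 0`, depending only on the dimension, such that for all
complementary subspaces `V`, `W` with `V ⊓ W = 0` the projection `π_{V,W}` onto `V`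
along `W` satisfies `‖π_{V,W}‖ ≤ C / δ(V,W)`. -/
theorem stmt_7 {E : Type*} [NormedAddCommGroup E] [InnerProductSpace ℂ E]
    [FiniteDimensional ℂ E]
    (n m : ℕ) (hn : 0 < n) (hm : 0 < m)
    (u : OrthonormalBasis (Fin (n + m)) ℂ E) :
    ∃ C > 0, ∀ (V W : Submodule ℂ E),
      Module.finrank ℂ ↥V = n → Module.finrank ℂ ↥W = m → V ⊓ W = ⊥ →
      ∀ (φ : OrthonormalBasis (Fin n) ℂ ↥V) (ψ : OrthonormalBasis (Fin m) ℂ ↥W),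
      ∀ π : E →ₗ[ℂ] E, (∀ x ∈ V, π x = x) → (∀ x ∈ W, π x = 0) →
        LinearMap.range π ≤ V →
        ‖LinearMap.toContinuousLinearMap π‖ ≤
          C / ‖Matrix.det (colMat u φ ψ)‖ := by
  classical
  set C : ℝ := ((n + m : ℕ) : ℝ) ^ 4 * (Nat.factorial (n + m) : ℝ) with hC
  have hdpos : 0 < n + m := by omega
  have hCpos : 0 < C := by positivity
  refine ⟨C, hCpos, ?_⟩
  intro V W hV hW hVW φ ψ π hπV hπW _hrange
  haveI : Nonempty (Fin (n + m)) := ⟨⟨0, hdpos⟩⟩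
  set v : Fin (n + m) → E := fun j =>
    Sum.elim (fun k => ((φ k : ↥V) : E)) (fun k => ((ψ k : ↥W) : E))
      (finSumFinEquiv.symm j) with hv
  -- norms of family elements
  have hvnorm : ∀ j, ‖v j‖ = 1 := by
    intro j
    show ‖Sum.elim (fun k => ((φ k : ↥V) : E)) (fun k => ((ψ k : ↥W) : E))
      (finSumFinEquiv.symm j)‖ = 1
    rcases h : finSumFinEquiv.symm j with k | k
    · exact φ.orthonormal.1 k
    · exact ψ.orthonormal.1 k
  -- membership
  have hvV : ∀ k, v (finSumFinEquiv (Sum.inl k)) ∈ V := by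
    intro k; simp [hv]
  have hvW : ∀ k, v (finSumFinEquiv (Sum.inr k)) ∈ W := by
    intro k; simp [hv]
  -- linear independence
  have habs : ∀ z : ℂ, ‖z‖ = ‖z‖ := fun z => rfl
  have liφ : LinearIndependent ℂ (fun k => ((φ k : ↥V) : E)) := by
    have := φ.toBasis.linearIndependent.map' V.subtype (Submodule.ker_subtype V)
    exact this
  have liψ : LinearIndependent ℂ (fun k => ((ψ k : ↥W) : E)) := by
    have := ψ.toBasis.linearIndependent.map' W.subtype (Submodule.ker_subtype W)
    exact this
  have hdisj : Disjoint (Submodule.span ℂ (Set.range fun k => ((φ k : ↥V) : E)))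
      (Submodule.span ℂ (Set.range fun k => ((ψ k : ↥W) : E))) := by
    have h1 : Submodule.span ℂ (Set.range fun k => ((φ k : ↥V) : E)) ≤ V := by
      rw [Submodule.span_le]; rintro _ ⟨k, rfl⟩; exact (φ k).2
    have h2 : Submodule.span ℂ (Set.range fun k => ((ψ k : ↥W) : E)) ≤ W := by
      rw [Submodule.span_le]; rintro _ ⟨k, rfl⟩; exact (ψ k).2
    exact (disjoint_iff.2 hVW).mono h1 h2
  have li : LinearIndependent ℂ v := by
    have := (liφ.sum_type liψ hdisj).comp finSumFinEquiv.symm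
      finSumFinEquiv.symm.injective
    exact this
  have card_eq : Fintype.card (Fin (n + m)) = Module.finrank ℂ E := by
    rw [Module.finrank_eq_card_basis u.toBasis]
  set b : Module.Basis (Fin (n + m)) ℂ E := basisOfLinearIndependentOfCardEqFinrank li card_eq with hbdef
  have hb : ⇑b = v := coe_basisOfLinearIndependentOfCardEqFinrank li card_eq
  set M : Matrix (Fin (n + m)) (Fin (n + m)) ℂ := u.toBasis.toMatrix v with hM
  have hcol : colMat u φ ψ = M := by
    ext i j
    simp [colMat, hM, Module.Basis.toMatrix_apply, OrthonormalBasis.coe_toBasis_repr_apply, hv]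
  have hMb : M = u.toBasis.toMatrix b := by rw [hM, hb]
  -- M is invertible
  have hMdet : IsUnit M.det := by
    rw [hMb]
    haveI := u.toBasis.invertibleToMatrix b
    exact (isUnit_of_invertible _).map (Matrix.detMonoidHom)
  have hδpos : 0 < ‖M.det‖ :=
    norm_pos_iff.mpr hMdet.ne_zero
  set δ : ℝ := ‖M.det‖ with hδ
  set N : Matrix (Fin (n + m)) (Fin (n + m)) ℂ := b.toMatrix u.toBasis with hN
  have hMN : M * N = 1 := by rw [hMb, hN]; exact Module.Basis.toMatrix_mul_toMatrix_flip _ _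
  have hNinv : N = M⁻¹ := (Matrix.inv_eq_right_inv hMN).symm
  -- entry bounds
  have hMle : ∀ i j, ‖M i j‖ ≤ 1 := by
    intro i j
    rw [hM, Module.Basis.toMatrix_apply, OrthonormalBasis.coe_toBasis_repr_apply,
      OrthonormalBasis.repr_apply_apply, habs]
    have h := norm_inner_le_norm (𝕜 := ℂ) (u i) (v j)
    rwa [u.orthonormal.1 i, hvnorm j, one_mul] at h
  have hNle : ∀ i j, ‖N i j‖ ≤ (Nat.factorial (n + m) : ℝ) / δ := by
    intro i j
    rw [hNinv, Matrix.inv_def, Ring.inverse_eq_inv]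
    simp only [Matrix.smul_apply, smul_eq_mul, norm_mul, norm_inv]
    rw [Matrix.adjugate_apply]
    rw [div_eq_inv_mul]
    refine mul_le_mul_of_nonneg_left ?_ (by positivity)
    refine abs_det_le_factorial _ fun i' j' => ?_
    rw [Matrix.updateRow_apply]
    split
    · rcases eq_or_ne j' i with h | h <;> simp [Pi.single_apply, h]
    · exact hMle _ _
  set P : Matrix (Fin (n + m)) (Fin (n + m)) ℂ := LinearMap.toMatrix b b π with hP
  have hPle : ∀ i j, ‖P i j‖ ≤ 1 := by
    intro i j
    rw [hP, LinearMap.toMatrix_apply]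
    rcases h : finSumFinEquiv.symm j with k | k
    · have hbj : b j ∈ V := by
        have : b j = v j := congrFun hb j
        rw [this]
        show Sum.elim (fun k => ((φ k : ↥V) : E)) (fun k => ((ψ k : ↥W) : E))
          (finSumFinEquiv.symm j) ∈ V
        rw [h]; exact (φ k).2
      rw [hπV _ hbj, Module.Basis.repr_self]
      rcases eq_or_ne j i with h' | h' <;> simp [Finsupp.single_apply, h']
    · have hbj : b j ∈ W := by
        have : b j = v j := congrFun hb j
        rw [this]
        show Sum.elim (fun k => ((φ k : ↥V) : E)) (fun k => ((ψ k : ↥W) : E))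
          (finSumFinEquiv.symm j) ∈ W
        rw [h]; exact (ψ k).2
      rw [hπW _ hbj]
      simp
  set A : Matrix (Fin (n + m)) (Fin (n + m)) ℂ := LinearMap.toMatrix u.toBasis u.toBasis π with hA
  have hMPN : M * P * N = A := by
    rw [hMb, hP, hN, hA]
    exact basis_toMatrix_mul_linearMap_toMatrix_mul_basis_toMatrix u.toBasis b u.toBasis b π
  have hAentry : ∀ i j, ‖A i j‖ ≤ ((n + m : ℕ) : ℝ) ^ 2 * (Nat.factorial (n + m) : ℝ) / δ := by
    intro i j
    rw [← hMPN]
    calc ‖(M * P * N) i j‖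
        = ‖∑ l, (M * P) i l * N l j‖ := by rw [Matrix.mul_apply]
      _ ≤ ∑ l, ‖(M * P) i l * N l j‖ := norm_sum_le _ _
      _ ≤ ∑ _l : Fin (n + m), ((n + m : ℕ) : ℝ) * ((Nat.factorial (n + m) : ℝ) / δ) := by
          refine Finset.sum_le_sum fun l _ => ?_
          rw [norm_mul]
          refine mul_le_mul ?_ (hNle _ _) (norm_nonneg _) (by positivity)
          calc ‖(M * P) i l‖ = ‖∑ k, M i k * P k l‖ := by
                rw [Matrix.mul_apply]
            _ ≤ ∑ k, ‖M i k * P k l‖ := norm_sum_le _ _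
            _ ≤ ∑ _k : Fin (n + m), (1 : ℝ) := by
                refine Finset.sum_le_sum fun k _ => ?_
                rw [norm_mul]
                calc ‖M i k‖ * ‖P k l‖
                    ≤ 1 * 1 := mul_le_mul (hMle _ _) (hPle _ _)
                        (norm_nonneg _) zero_le_one
                  _ = 1 := one_mul 1
            _ = ((n + m : ℕ) : ℝ) := by simp
      _ = ((n + m : ℕ) : ℝ) * (((n + m : ℕ) : ℝ) * ((Nat.factorial (n + m) : ℝ) / δ)) := by simp
      _ = ((n + m : ℕ) : ℝ) ^ 2 * (Nat.factorial (n + m) : ℝ) / δ := by ring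
  -- operator norm bound
  rw [hcol, ← hδ]
  refine ContinuousLinearMap.opNorm_le_bound _ (by positivity) fun x => ?_
  have hrepr : ∀ i, u.repr (π x) i = ∑ j, A i j * u.repr x j := by
    intro i
    have h2 := congrFun (LinearMap.toMatrix_mulVec_repr u.toBasis u.toBasis π x) i
    rw [Matrix.mulVec, dotProduct] at h2
    rw [← OrthonormalBasis.coe_toBasis_repr_apply, ← h2]
    simp [hA, OrthonormalBasis.coe_toBasis_repr_apply]
  have hxj : ∀ j, ‖u.repr x j‖ ≤ ‖x‖ := by
    intro j
    rw [OrthonormalBasis.repr_apply_apply, habs]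
    have h := norm_inner_le_norm (𝕜 := ℂ) (u j) x
    rwa [u.orthonormal.1 j, one_mul] at h
  have hπx : LinearMap.toContinuousLinearMap π x = π x := rfl
  rw [hπx]
  calc ‖π x‖ = ‖∑ i, u.repr (π x) i • u i‖ := by rw [u.sum_repr]
    _ ≤ ∑ i, ‖u.repr (π x) i • u i‖ := norm_sum_le _ _
    _ = ∑ i, ‖u.repr (π x) i‖ := by
        refine Finset.sum_congr rfl fun i _ => ?_
        rw [norm_smul, u.orthonormal.1 i, mul_one]
    _ ≤ ∑ _i : Fin (n + m), (((n + m : ℕ) : ℝ) * (((n + m : ℕ) : ℝ) ^ 2 * (Nat.factorial (n + m) : ℝ) / δ * ‖x‖)) := by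
        refine Finset.sum_le_sum fun i _ => ?_
        rw [hrepr i]
        calc ‖∑ j, A i j * u.repr x j‖
            ≤ ∑ j, ‖A i j * u.repr x j‖ := norm_sum_le _ _
          _ ≤ ∑ _j : Fin (n + m), (((n + m : ℕ) : ℝ) ^ 2 * (Nat.factorial (n + m) : ℝ) / δ * ‖x‖) := by
              refine Finset.sum_le_sum fun j _ => ?_
              rw [norm_mul]
              exact mul_le_mul (hAentry _ _) (hxj _) (norm_nonneg _) (by positivity)
          _ = ((n + m : ℕ) : ℝ) * (((n + m : ℕ) : ℝ) ^ 2 * (Nat.factorial (n + m) : ℝ) / δ * ‖x‖) := by simp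
    _ = ((n + m : ℕ) : ℝ) * (((n + m : ℕ) : ℝ) * (((n + m : ℕ) : ℝ) ^ 2 * (Nat.factorial (n + m) : ℝ) / δ * ‖x‖)) := by simp
    _ ≤ C / δ * ‖x‖ := by
        rw [hC]
        have : ((n + m : ℕ) : ℝ) * (((n + m : ℕ) : ℝ) * (((n + m : ℕ) : ℝ) ^ 2 * (Nat.factorial (n + m) : ℝ) / δ * ‖x‖))
            = ((n + m : ℕ) : ℝ) ^ 4 * (Nat.factorial (n + m) : ℝ) / δ * ‖x‖ := by ring
        rw [this]
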